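/- Let D be a binary dataset, o a linear order on the K attributes, and 𝒞 = {C_1,…,C_L} ∈ Seg(o) with q_D(S_i = v) > 0 for all i and v, and let p* ∈ M(𝒞) be the distribution with p*(A = t) = (∏_i q_D(C_i = t_{C_i})) / (∏_i q_D(S_i = t_{S_i})). Then for every strictly positive distribution p ∈ M(𝒞): ∑_{t∈D} log₂ p*(A = t) − ∑_{t∈D} log₂ p(A = t) = |D| · ∑_{v} p*(A = v) log₂ (p*(A = v)/p(A = v)). In particular this difference is non-negative, and it equals 0 if and only if p = p*; hence p* maximizes the likelihood of D over M(𝒞). -/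

import Mathlib

open Finset

/-- The marginal probability `p(X = v)`: the probability that the coordinates in `X`
agree with `v`. -/
noncomputable def marg {K : ℕ} (p : (Fin K → Bool) → ℝ) (X : Finset (Fin K))
    (v : Fin K → Bool) : ℝ :=
  ∑ t ∈ Finset.univ.filter (fun t : Fin K → Bool => ∀ i ∈ X, t i = v i), p t

/-- `p` is a probability distribution on `{0,1}^K`. -/
def IsDist {K : ℕ} (p : (Fin K → Bool) → ℝ) : Prop :=
  (∀ t, 0 ≤ p t) ∧ ∑ t : Fin K → Bool, p t = 1

/-- The empirical distribution of a dataset `D`. -/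
noncomputable def empDist {K : ℕ} (D : Multiset (Fin K → Bool)) : (Fin K → Bool) → ℝ :=
  fun v => (D.count v : ℝ) / (Multiset.card D : ℝ)

/-- The entropy (base 2) of the marginal of `p` on the attribute set `X`,
summing over representative vectors which are `false` outside of `X`. -/
noncomputable def segEntropy {K : ℕ} (p : (Fin K → Bool) → ℝ) (X : Finset (Fin K)) : ℝ :=
  -∑ v ∈ Finset.univ.filter (fun v : Fin K → Bool => ∀ i, i ∉ X → v i = false),
      marg p X v * Real.logb 2 (marg p X v)

/-- The item segment of the attributes at positions `a,…,b` in the order `o`. -/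
def segIv {K : ℕ} (o : Equiv.Perm (Fin K)) (a b : ℕ) : Finset (Fin K) :=
  (Finset.univ.filter (fun k : Fin K => a ≤ (k : ℕ) ∧ (k : ℕ) ≤ b)).image o

/-- A collection `𝒞 = {C_1, …, C_L} ∈ Seg(o)` of item segments covering all attributes,
forming an antichain, listed in the order of their first attribute.  The `i`-th segment
(for `0 ≤ i < L`) consists of the positions `s i, …, e i` in the order `o`. -/
structure SegColl (K : ℕ) where
  /-- number of segments -/
  L : ℕ
  hL : 0 < L
  /-- start position of each segment -/
  s : ℕ → ℕ
  /-- end position of each segment -/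
  e : ℕ → ℕ
  s_mono : ∀ i, i + 1 < L → s i < s (i + 1)
  e_mono : ∀ i, i + 1 < L → e i < e (i + 1)
  s_le_e : ∀ i, i < L → s i ≤ e i
  s_first : s 0 = 0
  e_last : e (L - 1) = K - 1
  e_lt : ∀ i, i < L → e i < K
  covers : ∀ i, i + 1 < L → s (i + 1) ≤ e i + 1

/-- The `i`-th item segment `C_{i+1}` of the collection, under the order `o`. -/
def SegColl.seg {K : ℕ} (𝒞 : SegColl K) (o : Equiv.Perm (Fin K)) (i : ℕ) : Finset (Fin K) :=
  segIv o (𝒞.s i) (𝒞.e i)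

/-- The intersection `S_i = C_i ∩ C_{i+1}` of consecutive segments. -/
def SegColl.ovl {K : ℕ} (𝒞 : SegColl K) (o : Equiv.Perm (Fin K)) (i : ℕ) : Finset (Fin K) :=
  𝒞.seg o i ∩ 𝒞.seg o (i + 1)

/-- Membership of a distribution `p` in the model `M(𝒞)`:
`p(A = t) ∏_{i=1}^{L-1} p(S_i = t) = ∏_{i=1}^{L} p(C_i = t)` for all `t`. -/
def memModel {K : ℕ} (o : Equiv.Perm (Fin K)) (𝒞 : SegColl K)
    (p : (Fin K → Bool) → ℝ) : Prop :=
  IsDist p ∧ ∀ t : Fin K → Bool,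
    p t * ∏ i ∈ Finset.range (𝒞.L - 1), marg p (𝒞.ovl o i) t
      = ∏ i ∈ Finset.range 𝒞.L, marg p (𝒞.seg o i) t

/-- The number of free parameters `df(𝒞)`. -/
def SegColl.df {K : ℕ} (𝒞 : SegColl K) (o : Equiv.Perm (Fin K)) : ℤ :=
  (∑ i ∈ Finset.range 𝒞.L, ((2 : ℤ) ^ (𝒞.seg o i).card - 1))
    - ∑ i ∈ Finset.range (𝒞.L - 1), ((2 : ℤ) ^ (𝒞.ovl o i).card - 1)

/-- The score of a single item segment `C`:
`score(C) = |D| H(C; D) + (log₂|D|/2)(2^{|C|} - 1)`. -/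
noncomputable def segScore {K : ℕ} (D : Multiset (Fin K → Bool)) (C : Finset (Fin K)) : ℝ :=
  (Multiset.card D : ℝ) * segEntropy (empDist D) C
    + Real.logb 2 (Multiset.card D) / 2 * ((2 : ℝ) ^ C.card - 1)

/-- The score of a collection: `score(𝒞) = ∑ score(C_i) - ∑ score(S_i)`. -/
noncomputable def collScore {K : ℕ} (D : Multiset (Fin K → Bool)) (o : Equiv.Perm (Fin K))
    (𝒞 : SegColl K) : ℝ :=
  ∑ i ∈ Finset.range 𝒞.L, segScore D (𝒞.seg o i)
    - ∑ i ∈ Finset.range (𝒞.L - 1), segScore D (𝒞.ovl o i)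

namespace PML

variable {K : ℕ}

/-- patterns supported on `B`. -/
def patt (B : Finset (Fin K)) : Finset (Fin K → Bool) :=
  Finset.univ.filter fun u => ∀ i ∉ B, u i = false

/-- combine: `u` on `B`, `w` elsewhere. -/
def cmb (B : Finset (Fin K)) (u w : Fin K → Bool) : Fin K → Bool :=
  fun i => if i ∈ B then u i else w i

/-- restrict `t` to `B`. -/
def restr (B : Finset (Fin K)) (t : Fin K → Bool) : Fin K → Bool :=
  fun i => if i ∈ B then t i else false

/-- `F` depends only on coordinates in `X`. -/
def Meas (X : Finset (Fin K)) (F : (Fin K → Bool) → ℝ) : Prop :=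
  ∀ t t', (∀ i ∈ X, t i = t' i) → F t = F t'

lemma Meas.mono {X Y : Finset (Fin K)} {F : (Fin K → Bool) → ℝ} (h : X ⊆ Y)
    (hF : Meas X F) : Meas Y F :=
  fun t t' ht => hF t t' fun i hi => ht i (h hi)

lemma mem_patt {B : Finset (Fin K)} {u : Fin K → Bool} :
    u ∈ patt B ↔ ∀ i ∉ B, u i = false := by simp [patt]

lemma restr_mem_patt (B : Finset (Fin K)) (t : Fin K → Bool) : restr B t ∈ patt B :=
  mem_patt.2 fun i hi => by simp [restr, hi]

lemma marg_congr {p : (Fin K → Bool) → ℝ} {X : Finset (Fin K)} {v v' : Fin K → Bool}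
    (h : ∀ i ∈ X, v i = v' i) : marg p X v = marg p X v' := by
  unfold marg
  apply Finset.sum_congr _ (fun _ _ => rfl)
  apply Finset.filter_congr
  intro t _
  constructor
  · intro ht i hi; rw [ht i hi, h i hi]
  · intro ht i hi; rw [ht i hi, h i hi]

lemma marg_meas (p : (Fin K → Bool) → ℝ) (X : Finset (Fin K)) : Meas X (marg p X) :=
  fun _ _ h => marg_congr h

lemma cmb_eq_of_disjoint {X B : Finset (Fin K)} (h : Disjoint X B) (u w : Fin K → Bool) :
    ∀ i ∈ X, cmb B u w i = w i := by
  intro i hi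
  simp [cmb, Finset.disjoint_left.mp h hi]

lemma marg_cmb {p : (Fin K → Bool) → ℝ} {X B : Finset (Fin K)} (h : Disjoint X B)
    (u w : Fin K → Bool) : marg p X (cmb B u w) = marg p X w :=
  marg_congr (cmb_eq_of_disjoint h u w)

lemma marg_univ (p : (Fin K → Bool) → ℝ) (v : Fin K → Bool) :
    marg p Finset.univ v = p v := by
  unfold marg
  rw [show Finset.univ.filter (fun t : Fin K → Bool => ∀ i ∈ Finset.univ, t i = v i) = {v} by
    ext t; simp [funext_iff]]
  simp

lemma patt_univ : patt (Finset.univ : Finset (Fin K)) = Finset.univ := by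
  ext u; simp [patt]

/-- Splitting a pattern sum along a disjoint union. -/
lemma sum_patt_union {B V : Finset (Fin K)} (h : Disjoint B V) (f : (Fin K → Bool) → ℝ) :
    ∑ t ∈ patt (B ∪ V), f t = ∑ u ∈ patt B, ∑ w ∈ patt V, f (cmb B u w) := by
  rw [← Finset.sum_product']
  apply Finset.sum_nbij' (fun t => (restr B t, restr V t)) (fun p => cmb B p.1 p.2)
  · intro t ht
    exact Finset.mem_product.2 ⟨restr_mem_patt _ _, restr_mem_patt _ _⟩
  · rintro ⟨u, w⟩ hp
    simp only [Finset.mem_product, mem_patt] at hp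
    refine mem_patt.2 fun i hi => ?_
    rw [Finset.mem_union, not_or] at hi
    simp only [cmb, if_neg hi.1]
    exact hp.2 i hi.2
  · intro t ht
    funext i
    by_cases hB : i ∈ B
    · simp [cmb, restr, hB]
    · by_cases hV : i ∈ V
      · simp [cmb, restr, hB, hV]
      · have := mem_patt.1 ht i (by simp [Finset.mem_union, hB, hV])
        simp [cmb, restr, hB, hV, this]
  · rintro ⟨u, w⟩ hp
    simp only [Finset.mem_product, mem_patt] at hp
    ext : 1 <;> funext i
    · by_cases hB : i ∈ B
      · simp [restr, cmb, hB]
      · simp [restr, cmb, hB, hp.1 i hB]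
    · by_cases hV : i ∈ V
      · have hB : i ∉ B := Finset.disjoint_right.mp h hV
        simp [restr, cmb, hB, hV]
      · simp [restr, hV, hp.2 i hV]
  · intro t ht
    congr 1
    funext i
    by_cases hB : i ∈ B
    · simp [cmb, restr, hB]
    · by_cases hV : i ∈ V
      · simp [cmb, restr, hB, hV]
      · have := mem_patt.1 ht i (by simp [Finset.mem_union, hB, hV])
        simp [cmb, restr, hB, hV, this]

/-- Summing a marginal over the patterns of the extra coordinates gives a smaller marginal. -/
lemma sum_marg_cmb {p : (Fin K → Bool) → ℝ} {S C : Finset (Fin K)} (hSC : S ⊆ C)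
    (v : Fin K → Bool) :
    ∑ u ∈ patt (C \ S), marg p C (cmb (C \ S) u v) = marg p S v := by
  unfold marg
  simp only [Finset.sum_filter]
  rw [Finset.sum_comm]
  apply Finset.sum_congr rfl
  intro t _
  by_cases hts : ∀ i ∈ S, t i = v i
  · rw [if_pos hts]
    rw [Finset.sum_eq_single (restr (C \ S) t)]
    · rw [if_pos]
      intro i hi
      by_cases hd : i ∈ C \ S
      · simp [cmb, restr, hd]
      · have hiS : i ∈ S := by
          by_contra hnS
          exact hd (Finset.mem_sdiff.mpr ⟨hi, hnS⟩)
        simp only [cmb, if_neg hd]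
        exact hts i hiS
    · intro u hu hne
      rw [if_neg]
      intro hcond
      apply hne
      funext i
      by_cases hd : i ∈ C \ S
      · have := hcond i (Finset.mem_sdiff.mp hd).1
        simp only [cmb, if_pos hd] at this
        simp [restr, hd, ← this]
      · simp [restr, hd, mem_patt.1 hu i hd]
    · intro h
      exact absurd (restr_mem_patt _ _) h
  · rw [if_neg hts]
    apply Finset.sum_eq_zero
    intro u _
    rw [if_neg]
    intro hcond
    apply hts
    intro i hi
    have hd : i ∉ C \ S := by simp [Finset.mem_sdiff, hi]
    have := hcond i (hSC hi)
    rwa [show cmb (C \ S) u v i = v i from by simp only [cmb, if_neg hd]] at this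

/-- Grouping an expectation of an `X`-measurable function by the value on `X`. -/
lemma sum_mul_meas {p : (Fin K → Bool) → ℝ} {X : Finset (Fin K)} {F : (Fin K → Bool) → ℝ}
    (hF : Meas X F) :
    ∑ t : Fin K → Bool, p t * F t = ∑ w ∈ patt X, marg p X w * F w := by
  have hU : (Finset.univ : Finset (Fin K)) = (Finset.univ \ X) ∪ X := by
    rw [Finset.sdiff_union_of_subset (Finset.subset_univ X)]
  have hdisj : Disjoint (Finset.univ \ X) X := Finset.sdiff_disjoint
  calc ∑ t : Fin K → Bool, p t * F t
      = ∑ t ∈ patt ((Finset.univ \ X) ∪ X), p t * F t := by rw [← hU, patt_univ]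
    _ = ∑ u ∈ patt (Finset.univ \ X), ∑ w ∈ patt X, p (cmb (Finset.univ \ X) u w) *
          F (cmb (Finset.univ \ X) u w) := sum_patt_union hdisj _
    _ = ∑ w ∈ patt X, (∑ u ∈ patt (Finset.univ \ X), p (cmb (Finset.univ \ X) u w)) * F w := by
        rw [Finset.sum_comm]
        apply Finset.sum_congr rfl
        intro w _
        rw [Finset.sum_mul]
        apply Finset.sum_congr rfl
        intro u _
        congr 1
        exact hF _ _ (cmb_eq_of_disjoint hdisj.symm u w)
    _ = ∑ w ∈ patt X, marg p X w * F w := by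
        apply Finset.sum_congr rfl
        intro w _
        congr 1
        have := sum_marg_cmb (p := p) (Finset.subset_univ X) w
        simp only [marg_univ] at this
        exact this


section Seg

variable {K : ℕ} (o : Equiv.Perm (Fin K))

lemma mem_segIv {a b : ℕ} {k : Fin K} :
    k ∈ segIv o a b ↔ a ≤ ((o.symm k : Fin K) : ℕ) ∧ ((o.symm k : Fin K) : ℕ) ≤ b := by
  simp only [segIv, Finset.mem_image, Finset.mem_filter, Finset.mem_univ, true_and]
  constructor
  · rintro ⟨x, hx, rfl⟩
    simpa using hx
  · intro h
    exact ⟨o.symm k, h, by simp⟩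

lemma segIv_union {a b c : ℕ} (h1 : a ≤ b + 1) (h2 : b ≤ c) :
    segIv o a b ∪ segIv o (b + 1) c = segIv o a c := by
  ext k
  simp only [Finset.mem_union, mem_segIv]
  omega

lemma segIv_disjoint {a b c d : ℕ} (h : b < c) :
    Disjoint (segIv o a b) (segIv o c d) := by
  rw [Finset.disjoint_left]
  intro k hk hk'
  rw [mem_segIv] at hk hk'
  omega

lemma segIv_sdiff_right {a b d : ℕ} (h : a ≤ b + 1) :
    segIv o a d \ segIv o a b = segIv o (b + 1) d := by
  ext k
  simp only [Finset.mem_sdiff, mem_segIv, not_and, not_le]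
  omega

lemma segIv_sdiff_left {a b c : ℕ} (h : c ≤ b + 1) (hc : 0 < c) :
    segIv o a b \ segIv o c b = segIv o a (c - 1) := by
  ext k
  simp only [Finset.mem_sdiff, mem_segIv, not_and, not_le]
  omega

lemma segIv_subset {a b a' b' : ℕ} (h1 : a' ≤ a) (h2 : b ≤ b') :
    segIv o a b ⊆ segIv o a' b' := by
  intro k hk
  rw [mem_segIv] at hk ⊢
  omega

variable (𝒞 : SegColl K)

lemma mono_le_aux (f : ℕ → ℕ) (hf : ∀ i, i + 1 < 𝒞.L → f i < f (i + 1)) :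
    ∀ i m, i ≤ m → m < 𝒞.L → f i ≤ f m := by
  have key : ∀ i d, i + d < 𝒞.L → f i ≤ f (i + d) := by
    intro i d
    induction d with
    | zero => intro _; exact le_refl _
    | succ n ih =>
      intro h
      calc f i ≤ f (i + n) := ih (by omega)
        _ ≤ f (i + n + 1) := le_of_lt (hf (i + n) (by omega))
        _ = f (i + (n + 1)) := by ring_nf
  intro i m him hm
  have := key i (m - i) (by omega)
  rwa [show i + (m - i) = m by omega] at this

lemma e_mono_le : ∀ i m, i ≤ m → m < 𝒞.L → 𝒞.e i ≤ 𝒞.e m :=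
  mono_le_aux 𝒞 𝒞.e 𝒞.e_mono

lemma s_mono_le : ∀ i m, i ≤ m → m < 𝒞.L → 𝒞.s i ≤ 𝒞.s m :=
  mono_le_aux 𝒞 𝒞.s 𝒞.s_mono

lemma ovl_eq {i : ℕ} (hi : i + 1 < 𝒞.L) :
    𝒞.ovl o i = segIv o (𝒞.s (i + 1)) (𝒞.e i) := by
  have h1 := 𝒞.s_mono i hi
  have h2 := 𝒞.e_mono i hi
  ext k
  simp only [SegColl.ovl, SegColl.seg, Finset.mem_inter, mem_segIv]
  omega

lemma segIv_zero_univ : segIv o 0 (K - 1) = Finset.univ := by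
  ext k
  simp only [mem_segIv, Finset.mem_univ, iff_true]
  have := (o.symm k).isLt
  omega

end Seg

section Tel

variable {K : ℕ} (o : Equiv.Perm (Fin K)) (𝒞 : SegColl K) (q F : (Fin K → Bool) → ℝ)

/-- The right-telescoping partial sums. -/
noncomputable def Atel (m : ℕ) : ℝ :=
  ∑ w ∈ patt (segIv o 0 (𝒞.e m)),
    (∏ i ∈ Finset.range (m + 1), marg q (𝒞.seg o i) w) *
      (∏ i ∈ Finset.range m, (marg q (𝒞.ovl o i) w)⁻¹) * F w

/-- The left-telescoping partial sums. -/
noncomputable def Ltel (j m : ℕ) : ℝ :=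
  ∑ w ∈ patt (segIv o (𝒞.s m) (𝒞.e j)),
    (∏ i ∈ Finset.Ico m (j + 1), marg q (𝒞.seg o i) w) *
      (∏ i ∈ Finset.Ico m j, (marg q (𝒞.ovl o i) w)⁻¹) * F w

lemma mul_inv_shuffle (a b c : ℝ) (h : a ≠ 0) : a * (b * a⁻¹ * c) = b * c := by
  field_simp

lemma Atel_step (hpos : ∀ i, i + 1 < 𝒞.L → ∀ v, marg q (𝒞.ovl o i) v ≠ 0)
    {j : ℕ} (hF : Meas (𝒞.seg o j) F)
    {m : ℕ} (hjm : j ≤ m) (hm : m + 1 < 𝒞.L) :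
    Atel o 𝒞 q F (m + 1) = Atel o 𝒞 q F m := by
  set B := segIv o (𝒞.e m + 1) (𝒞.e (m + 1)) with hBdef
  have hBV : Disjoint B (segIv o 0 (𝒞.e m)) :=
    (segIv_disjoint o (Nat.lt_succ_self _)).symm
  have hU : segIv o 0 (𝒞.e (m + 1)) = B ∪ segIv o 0 (𝒞.e m) := by
    rw [Finset.union_comm, segIv_union o (by omega) (le_of_lt (𝒞.e_mono m hm))]
  have hsegdisj : ∀ i ≤ m, Disjoint (𝒞.seg o i) B := by
    intro i hi
    have : 𝒞.e i ≤ 𝒞.e m := e_mono_le 𝒞 i m hi (by omega)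
    exact segIv_disjoint o (by omega)
  have hovldisj : ∀ i ≤ m, Disjoint (𝒞.ovl o i) B := fun i hi =>
    Finset.disjoint_of_subset_left Finset.inter_subset_left (hsegdisj i hi)
  have hkey : ∀ w, ∑ u ∈ patt B, marg q (𝒞.seg o (m + 1)) (cmb B u w)
      = marg q (𝒞.ovl o m) w := by
    intro w
    have hSC : 𝒞.ovl o m ⊆ 𝒞.seg o (m + 1) := by
      rw [ovl_eq o 𝒞 hm]
      exact segIv_subset o (le_refl _) (le_of_lt (𝒞.e_mono m hm))
    have hdiff : 𝒞.seg o (m + 1) \ 𝒞.ovl o m = B := by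
      rw [ovl_eq o 𝒞 hm, SegColl.seg, segIv_sdiff_right o (𝒞.covers m hm)]
    have := sum_marg_cmb (p := q) hSC w
    rwa [hdiff] at this
  unfold Atel
  rw [hU, sum_patt_union hBV, Finset.sum_comm]
  apply Finset.sum_congr rfl
  intro w _
  have hstep : ∀ u ∈ patt B,
      (∏ i ∈ Finset.range (m + 1 + 1), marg q (𝒞.seg o i) (cmb B u w)) *
        (∏ i ∈ Finset.range (m + 1), (marg q (𝒞.ovl o i) (cmb B u w))⁻¹) * F (cmb B u w)
      = marg q (𝒞.seg o (m + 1)) (cmb B u w) *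
        ((∏ i ∈ Finset.range (m + 1), marg q (𝒞.seg o i) w) *
          (∏ i ∈ Finset.range m, (marg q (𝒞.ovl o i) w)⁻¹) *
          (marg q (𝒞.ovl o m) w)⁻¹ * F w) := by
    intro u _
    have e1 : ∏ i ∈ Finset.range (m + 1), marg q (𝒞.seg o i) (cmb B u w)
        = ∏ i ∈ Finset.range (m + 1), marg q (𝒞.seg o i) w :=
      Finset.prod_congr rfl fun i hi =>
        marg_cmb (hsegdisj i (Nat.lt_succ_iff.mp (Finset.mem_range.mp hi))) u w
    have e2 : ∏ i ∈ Finset.range m, (marg q (𝒞.ovl o i) (cmb B u w))⁻¹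
        = ∏ i ∈ Finset.range m, (marg q (𝒞.ovl o i) w)⁻¹ :=
      Finset.prod_congr rfl fun i hi => by
        rw [marg_cmb (hovldisj i (le_of_lt (Finset.mem_range.mp hi))) u w]
    have e3 : marg q (𝒞.ovl o m) (cmb B u w) = marg q (𝒞.ovl o m) w :=
      marg_cmb (hovldisj m (le_refl m)) u w
    have e4 : F (cmb B u w) = F w :=
      hF (cmb B u w) w (cmb_eq_of_disjoint (hsegdisj j hjm) u w)
    rw [Finset.prod_range_succ (fun i => marg q (𝒞.seg o i) (cmb B u w)),
      Finset.prod_range_succ (fun i => (marg q (𝒞.ovl o i) (cmb B u w))⁻¹),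
      e1, e2, e3, e4]
    ring
  rw [Finset.sum_congr rfl hstep, ← Finset.sum_mul, hkey w]
  exact mul_inv_shuffle _ _ _ (hpos m hm w)

lemma Ltel_step (hpos : ∀ i, i + 1 < 𝒞.L → ∀ v, marg q (𝒞.ovl o i) v ≠ 0)
    {j : ℕ} (hj : j < 𝒞.L) (hF : Meas (𝒞.seg o j) F)
    {m : ℕ} (hmj : m < j) :
    Ltel o 𝒞 q F j m = Ltel o 𝒞 q F j (m + 1) := by
  have hmL : m + 1 < 𝒞.L := by omega
  have hs1 : 𝒞.s m < 𝒞.s (m + 1) := 𝒞.s_mono m hmL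
  set B := segIv o (𝒞.s m) (𝒞.s (m + 1) - 1) with hBdef
  have hBV : Disjoint B (segIv o (𝒞.s (m + 1)) (𝒞.e j)) :=
    segIv_disjoint o (by omega)
  have hU : segIv o (𝒞.s m) (𝒞.e j) = B ∪ segIv o (𝒞.s (m + 1)) (𝒞.e j) := by
    have hcov := 𝒞.covers m hmL
    have hej : 𝒞.e m ≤ 𝒞.e j := e_mono_le 𝒞 m j (by omega) hj
    have h1 : 𝒞.s (m + 1) - 1 + 1 = 𝒞.s (m + 1) := by omega
    rw [hBdef, ← segIv_union o (by omega) (by omega : 𝒞.s (m + 1) - 1 ≤ 𝒞.e j), h1]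
  have hsegdisj : ∀ i, m + 1 ≤ i → i ≤ j → Disjoint (𝒞.seg o i) B := by
    intro i h1 h2
    have : 𝒞.s (m + 1) ≤ 𝒞.s i := s_mono_le 𝒞 (m + 1) i h1 (by omega)
    exact (segIv_disjoint o (by omega)).symm
  have hovlmdisj : Disjoint (𝒞.ovl o m) B := by
    rw [ovl_eq o 𝒞 hmL]
    exact (segIv_disjoint o (by omega)).symm
  have hovldisj : ∀ i, m + 1 ≤ i → i < j → Disjoint (𝒞.ovl o i) B := fun i h1 h2 =>
    Finset.disjoint_of_subset_left Finset.inter_subset_left (hsegdisj i h1 (by omega))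
  have hkey : ∀ w, ∑ u ∈ patt B, marg q (𝒞.seg o m) (cmb B u w)
      = marg q (𝒞.ovl o m) w := by
    intro w
    have hSC : 𝒞.ovl o m ⊆ 𝒞.seg o m := by
      rw [ovl_eq o 𝒞 hmL]
      exact segIv_subset o (le_of_lt hs1) (le_refl _)
    have hdiff : 𝒞.seg o m \ 𝒞.ovl o m = B := by
      rw [ovl_eq o 𝒞 hmL, SegColl.seg, segIv_sdiff_left o (𝒞.covers m hmL) (by omega)]
    have := sum_marg_cmb (p := q) hSC w
    rwa [hdiff] at this
  unfold Ltel
  rw [hU, sum_patt_union hBV, Finset.sum_comm]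
  apply Finset.sum_congr rfl
  intro w _
  have hstep : ∀ u ∈ patt B,
      (∏ i ∈ Finset.Ico m (j + 1), marg q (𝒞.seg o i) (cmb B u w)) *
        (∏ i ∈ Finset.Ico m j, (marg q (𝒞.ovl o i) (cmb B u w))⁻¹) * F (cmb B u w)
      = marg q (𝒞.seg o m) (cmb B u w) *
        ((∏ i ∈ Finset.Ico (m + 1) (j + 1), marg q (𝒞.seg o i) w) *
          (∏ i ∈ Finset.Ico (m + 1) j, (marg q (𝒞.ovl o i) w)⁻¹) *
          (marg q (𝒞.ovl o m) w)⁻¹ * F w) := by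
    intro u _
    have e1 : ∏ i ∈ Finset.Ico (m + 1) (j + 1), marg q (𝒞.seg o i) (cmb B u w)
        = ∏ i ∈ Finset.Ico (m + 1) (j + 1), marg q (𝒞.seg o i) w :=
      Finset.prod_congr rfl fun i hi => by
        have h' := Finset.mem_Ico.mp hi
        exact marg_cmb (hsegdisj i h'.1 (by omega)) u w
    have e2 : ∏ i ∈ Finset.Ico (m + 1) j, (marg q (𝒞.ovl o i) (cmb B u w))⁻¹
        = ∏ i ∈ Finset.Ico (m + 1) j, (marg q (𝒞.ovl o i) w)⁻¹ :=
      Finset.prod_congr rfl fun i hi => by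
        have h' := Finset.mem_Ico.mp hi
        rw [marg_cmb (hovldisj i h'.1 h'.2) u w]
    have e3 : marg q (𝒞.ovl o m) (cmb B u w) = marg q (𝒞.ovl o m) w :=
      marg_cmb hovlmdisj u w
    have e4 : F (cmb B u w) = F w :=
      hF (cmb B u w) w (cmb_eq_of_disjoint (hsegdisj j (by omega) (le_refl j)) u w)
    rw [Finset.prod_eq_prod_Ico_succ_bot (by omega : m < j + 1)
        (fun i => marg q (𝒞.seg o i) (cmb B u w)),
      Finset.prod_eq_prod_Ico_succ_bot (by omega : m < j)
        (fun i => (marg q (𝒞.ovl o i) (cmb B u w))⁻¹),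
      e1, e2, e3, e4]
    ring
  rw [Finset.sum_congr rfl hstep, ← Finset.sum_mul, hkey w]
  exact mul_inv_shuffle _ _ _ (hpos m hmL w)

/-- Main lemma: the model distribution built from marginals of `q` has the same
expectations of `C_j`-measurable functions as `q`. -/
theorem model_marg_sum (hpos : ∀ i, i + 1 < 𝒞.L → ∀ v, marg q (𝒞.ovl o i) v ≠ 0)
    {j : ℕ} (hj : j < 𝒞.L) (hF : Meas (𝒞.seg o j) F) :
    ∑ t : Fin K → Bool,
      ((∏ i ∈ Finset.range 𝒞.L, marg q (𝒞.seg o i) t) /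
        ∏ i ∈ Finset.range (𝒞.L - 1), marg q (𝒞.ovl o i) t) * F t
      = ∑ t : Fin K → Bool, q t * F t := by
  have hL := 𝒞.hL
  have h0 : ∑ t : Fin K → Bool,
      ((∏ i ∈ Finset.range 𝒞.L, marg q (𝒞.seg o i) t) /
        ∏ i ∈ Finset.range (𝒞.L - 1), marg q (𝒞.ovl o i) t) * F t
      = Atel o 𝒞 q F (𝒞.L - 1) := by
    unfold Atel
    rw [𝒞.e_last, segIv_zero_univ o, patt_univ]
    have hLL : 𝒞.L - 1 + 1 = 𝒞.L := by omega
    rw [hLL]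
    apply Finset.sum_congr rfl
    intro t _
    rw [div_eq_mul_inv, ← Finset.prod_inv_distrib]
  have hAchain : ∀ d, j + d < 𝒞.L → Atel o 𝒞 q F (j + d) = Atel o 𝒞 q F j := by
    intro d
    induction d with
    | zero => intro _; rfl
    | succ n ih =>
      intro h
      have h2 : j + (n + 1) = (j + n) + 1 := by ring
      rw [h2, Atel_step o 𝒞 q F hpos hF (by omega) (by omega), ih (by omega)]
  have hLchain : ∀ d, d ≤ j → Ltel o 𝒞 q F j (j - d) = Ltel o 𝒞 q F j j := by
    intro d
    induction d with
    | zero => intro _; rfl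
    | succ n ih =>
      intro h
      rw [Ltel_step o 𝒞 q F hpos hj hF (by omega : j - (n + 1) < j)]
      rw [show j - (n + 1) + 1 = j - n by omega]
      exact ih (by omega)
  have hAj : Atel o 𝒞 q F j = Ltel o 𝒞 q F j 0 := by
    unfold Atel Ltel
    rw [𝒞.s_first, Finset.range_eq_Ico, Finset.range_eq_Ico]
  have hLj : Ltel o 𝒞 q F j j = ∑ t : Fin K → Bool, q t * F t := by
    unfold Ltel
    rw [sum_mul_meas (p := q) hF]
    apply Finset.sum_congr (by rw [SegColl.seg])
    intro w _
    rw [show Finset.Ico j (j + 1) = {j} from by rw [Finset.Ico_add_one_right_eq_Icc, Finset.Icc_self],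
      Finset.prod_singleton, Finset.Ico_self, Finset.prod_empty, mul_one]
  calc ∑ t : Fin K → Bool,
      ((∏ i ∈ Finset.range 𝒞.L, marg q (𝒞.seg o i) t) /
        ∏ i ∈ Finset.range (𝒞.L - 1), marg q (𝒞.ovl o i) t) * F t
      = Atel o 𝒞 q F (𝒞.L - 1) := h0
    _ = Atel o 𝒞 q F (j + (𝒞.L - 1 - j)) := by rw [show j + (𝒞.L - 1 - j) = 𝒞.L - 1 by omega]
    _ = Atel o 𝒞 q F j := hAchain _ (by omega)
    _ = Ltel o 𝒞 q F j 0 := hAj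
    _ = Ltel o 𝒞 q F j (j - j) := by rw [Nat.sub_self]
    _ = Ltel o 𝒞 q F j j := hLchain j (le_refl j)
    _ = ∑ t : Fin K → Bool, q t * F t := hLj

end Tel



section Aux

variable {K : ℕ}

lemma marg_nonneg {p : (Fin K → Bool) → ℝ} (hp : ∀ t, 0 ≤ p t) (X : Finset (Fin K))
    (v : Fin K → Bool) : 0 ≤ marg p X v :=
  Finset.sum_nonneg fun t _ => hp t

lemma self_mem_marg_filter (X : Finset (Fin K)) (v : Fin K → Bool) :
    v ∈ Finset.univ.filter (fun t : Fin K → Bool => ∀ i ∈ X, t i = v i) :=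
  Finset.mem_filter.2 ⟨Finset.mem_univ v, fun _ _ => rfl⟩

lemma marg_pos {p : (Fin K → Bool) → ℝ} (hp : ∀ t, 0 < p t) (X : Finset (Fin K))
    (v : Fin K → Bool) : 0 < marg p X v :=
  Finset.sum_pos (fun t _ => hp t) ⟨v, self_mem_marg_filter X v⟩

lemma le_marg {p : (Fin K → Bool) → ℝ} (hp : ∀ t, 0 ≤ p t) (X : Finset (Fin K))
    (v : Fin K → Bool) : p v ≤ marg p X v :=
  Finset.single_le_sum (fun t _ => hp t) (self_mem_marg_filter X v)

lemma map_sum_eq {D : Multiset (Fin K → Bool)} (hD : D ≠ 0) (f : (Fin K → Bool) → ℝ) :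
    (D.map f).sum = (Multiset.card D : ℝ) * ∑ v : Fin K → Bool, empDist D v * f v := by
  have hcard : (Multiset.card D : ℝ) ≠ 0 := by
    simpa [Nat.cast_eq_zero, Multiset.card_eq_zero] using hD
  have h1 : (D.map f).sum = ∑ v : Fin K → Bool, (D.count v : ℝ) * f v := by
    rw [Finset.sum_multiset_map_count]
    rw [Finset.sum_subset (Finset.subset_univ D.toFinset)]
    · apply Finset.sum_congr rfl
      intro v _
      rw [nsmul_eq_mul]
    · intro x _ hx
      have : D.count x = 0 := Multiset.count_eq_zero.2 (by simpa using hx)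
      simp [this]
  rw [h1, Finset.mul_sum]
  apply Finset.sum_congr rfl
  intro v _
  unfold empDist
  field_simp

lemma logb_prod {ι : Type*} (s : Finset ι) (f : ι → ℝ) (h : ∀ i ∈ s, f i ≠ 0) :
    Real.logb 2 (∏ i ∈ s, f i) = ∑ i ∈ s, Real.logb 2 (f i) := by
  simp only [Real.logb]
  rw [Real.log_prod h, Finset.sum_div]

lemma kl_ineq {p1 p2 : (Fin K → Bool) → ℝ} (h1 : IsDist p1) (h2 : IsDist p2)
    (hpos : ∀ t, 0 < p2 t) :
    0 ≤ ∑ v : Fin K → Bool, p1 v * Real.log (p1 v / p2 v) ∧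
      ((∑ v : Fin K → Bool, p1 v * Real.log (p1 v / p2 v)) = 0 → p2 = p1) := by
  set e : (Fin K → Bool) → ℝ :=
    fun v => p2 v - p1 v + p1 v * Real.log (p1 v / p2 v) with he
  have hterm : ∀ v, 0 ≤ e v := by
    intro v
    rcases eq_or_lt_of_le (h1.1 v) with h0 | h0
    · simp only [he, ← h0, zero_mul, sub_zero, add_zero]
      exact le_of_lt (hpos v)
    · have hlog : Real.log (p2 v / p1 v) ≤ p2 v / p1 v - 1 :=
        Real.log_le_sub_one_of_pos (div_pos (hpos v) h0)
      have hrw : Real.log (p1 v / p2 v) = -Real.log (p2 v / p1 v) := by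
        rw [Real.log_div (ne_of_gt h0) (ne_of_gt (hpos v)),
          Real.log_div (ne_of_gt (hpos v)) (ne_of_gt h0)]
        ring
      have hmul : p1 v * Real.log (p2 v / p1 v) ≤ p1 v * (p2 v / p1 v - 1) :=
        mul_le_mul_of_nonneg_left hlog (le_of_lt h0)
      have hfs : p1 v * (p2 v / p1 v - 1) = p2 v - p1 v := by
        field_simp
      simp only [he, hrw]
      nlinarith
  have hsum : ∑ v : Fin K → Bool, e v
      = ∑ v : Fin K → Bool, p1 v * Real.log (p1 v / p2 v) := by
    simp only [he]
    rw [Finset.sum_add_distrib, Finset.sum_sub_distrib, h1.2, h2.2]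
    ring
  constructor
  · rw [← hsum]
    exact Finset.sum_nonneg fun v _ => hterm v
  · intro h0
    have hall : ∀ v ∈ (Finset.univ : Finset (Fin K → Bool)), e v = 0 :=
      (Finset.sum_eq_zero_iff_of_nonneg fun v _ => hterm v).1 (by rw [hsum, h0])
    funext v
    have hv := hall v (Finset.mem_univ v)
    by_contra hne
    rcases eq_or_lt_of_le (h1.1 v) with hp0 | hp0
    · simp only [he, ← hp0, zero_mul, sub_zero, add_zero] at hv
      exact absurd hv (ne_of_gt (hpos v))
    · have hx : p2 v / p1 v ≠ 1 := by
        intro hx1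
        rw [div_eq_one_iff_eq (ne_of_gt hp0)] at hx1
        exact hne hx1
      have hlt : Real.log (p2 v / p1 v) < p2 v / p1 v - 1 :=
        Real.log_lt_sub_one_of_pos (div_pos (hpos v) hp0) hx
      have hrw : Real.log (p1 v / p2 v) = -Real.log (p2 v / p1 v) := by
        rw [Real.log_div (ne_of_gt hp0) (ne_of_gt (hpos v)),
          Real.log_div (ne_of_gt (hpos v)) (ne_of_gt hp0)]
        ring
      have hmul : p1 v * Real.log (p2 v / p1 v) < p1 v * (p2 v / p1 v - 1) :=
        (mul_lt_mul_iff_right₀ hp0).2 hlt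
      have hfs : p1 v * (p2 v / p1 v - 1) = p2 v - p1 v := by
        field_simp
      simp only [he, hrw] at hv
      nlinarith

end Aux

end PML

open PML

/-- `p*` maximizes the likelihood of `D` over `M(𝒞)`: the difference of
log-likelihoods is `|D|` times the Kullback–Leibler divergence from `p` to `p*`, which is
non-negative and zero iff `p = p*`. -/
theorem pstar_maximizes_likelihood {K : ℕ} (D : Multiset (Fin K → Bool)) (hD : D ≠ 0)
    (o : Equiv.Perm (Fin K)) (𝒞 : SegColl K)
    (hpos : ∀ i < 𝒞.L - 1, ∀ v : Fin K → Bool, 0 < marg (empDist D) (𝒞.ovl o i) v)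
    (pstar : (Fin K → Bool) → ℝ)
    (hpstar : ∀ t : Fin K → Bool, pstar t =
      (∏ i ∈ Finset.range 𝒞.L, marg (empDist D) (𝒞.seg o i) t) /
        ∏ i ∈ Finset.range (𝒞.L - 1), marg (empDist D) (𝒞.ovl o i) t)
    (hpstarM : memModel o 𝒞 pstar)
    (p : (Fin K → Bool) → ℝ) (hpMem : memModel o 𝒞 p) (hppos : ∀ t, 0 < p t) :
    ((D.map fun t => Real.logb 2 (pstar t)).sum - (D.map fun t => Real.logb 2 (p t)).sum
      = (Multiset.card D : ℝ) *
        ∑ v : Fin K → Bool, pstar v * Real.logb 2 (pstar v / p v)) ∧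
    (0 ≤ (D.map fun t => Real.logb 2 (pstar t)).sum
        - (D.map fun t => Real.logb 2 (p t)).sum) ∧
    ((D.map fun t => Real.logb 2 (pstar t)).sum - (D.map fun t => Real.logb 2 (p t)).sum = 0
      ↔ p = pstar) := by
  have hL := 𝒞.hL
  set q : (Fin K → Bool) → ℝ := empDist D with hqdef
  have hqnn : ∀ t, 0 ≤ q t := fun t => div_nonneg (Nat.cast_nonneg _) (Nat.cast_nonneg _)
  have hpos' : ∀ i, i + 1 < 𝒞.L → ∀ v, marg q (𝒞.ovl o i) v ≠ 0 :=
    fun i hi v => ne_of_gt (hpos i (by omega) v)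
  have hden : ∀ v, 0 < ∏ i ∈ Finset.range (𝒞.L - 1), marg q (𝒞.ovl o i) v :=
    fun v => Finset.prod_pos fun i hi => hpos i (Finset.mem_range.mp hi) v
  have hq0 : ∀ v, pstar v = 0 → q v = 0 := by
    intro v h
    rw [hpstar v, div_eq_zero_iff] at h
    rcases h with h | h
    · obtain ⟨i, hi, hz⟩ := Finset.prod_eq_zero_iff.1 h
      exact le_antisymm (hz ▸ le_marg hqnn (𝒞.seg o i) v) (hqnn v)
    · exact absurd h (ne_of_gt (hden v))
  have hnumne : ∀ v, pstar v ≠ 0 → ∀ i ∈ Finset.range 𝒞.L, marg q (𝒞.seg o i) v ≠ 0 := by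
    intro v h i hi hz
    exact h (by rw [hpstar v, Finset.prod_eq_zero hi hz, zero_div])
  -- decomposition of logb p
  have hlogp : ∀ v, Real.logb 2 (p v)
      = (∑ i ∈ Finset.range 𝒞.L, Real.logb 2 (marg p (𝒞.seg o i) v))
        - ∑ i ∈ Finset.range (𝒞.L - 1), Real.logb 2 (marg p (𝒞.ovl o i) v) := by
    intro v
    have hSpos : 0 < ∏ i ∈ Finset.range (𝒞.L - 1), marg p (𝒞.ovl o i) v :=
      Finset.prod_pos fun i _ => marg_pos hppos _ v
    have hCpos : 0 < ∏ i ∈ Finset.range 𝒞.L, marg p (𝒞.seg o i) v :=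
      Finset.prod_pos fun i _ => marg_pos hppos _ v
    have heq : p v = (∏ i ∈ Finset.range 𝒞.L, marg p (𝒞.seg o i) v) /
        ∏ i ∈ Finset.range (𝒞.L - 1), marg p (𝒞.ovl o i) v :=
      (eq_div_iff (ne_of_gt hSpos)).2 (hpMem.2 v)
    rw [heq, Real.logb_div (ne_of_gt hCpos) (ne_of_gt hSpos),
      logb_prod _ _ (fun i _ => ne_of_gt (marg_pos hppos _ v)),
      logb_prod _ _ (fun i _ => ne_of_gt (marg_pos hppos _ v))]
  have hlogps : ∀ v, pstar v ≠ 0 → Real.logb 2 (pstar v)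
      = (∑ i ∈ Finset.range 𝒞.L, Real.logb 2 (marg q (𝒞.seg o i) v))
        - ∑ i ∈ Finset.range (𝒞.L - 1), Real.logb 2 (marg q (𝒞.ovl o i) v) := by
    intro v h
    have hnum : (∏ i ∈ Finset.range 𝒞.L, marg q (𝒞.seg o i) v) ≠ 0 := by
      intro hz
      exact h (by rw [hpstar v, hz, zero_div])
    rw [hpstar v, Real.logb_div hnum (ne_of_gt (hden v)),
      logb_prod _ _ (hnumne v h),
      logb_prod _ _ (fun i hi => hpos' i (by
        have := Finset.mem_range.mp hi
        omega) v)]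
  set G : (Fin K → Bool) → ℝ := fun v => Real.logb 2 (pstar v) - Real.logb 2 (p v) with hGdef
  set fC : ℕ → (Fin K → Bool) → ℝ := fun j v =>
    Real.logb 2 (marg q (𝒞.seg o j) v) - Real.logb 2 (marg p (𝒞.seg o j) v) with hfCdef
  set fS : ℕ → (Fin K → Bool) → ℝ := fun i v =>
    Real.logb 2 (marg q (𝒞.ovl o i) v) - Real.logb 2 (marg p (𝒞.ovl o i) v) with hfSdef
  have hgdecomp : ∀ v, pstar v ≠ 0 → G v
      = (∑ j ∈ Finset.range 𝒞.L, fC j v) - ∑ i ∈ Finset.range (𝒞.L - 1), fS i v := by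
    intro v h
    simp only [hGdef, hfCdef, hfSdef]
    rw [hlogps v h, hlogp v, Finset.sum_sub_distrib, Finset.sum_sub_distrib]
    ring
  have hswap : ∀ (F : (Fin K → Bool) → ℝ) (j : ℕ), j < 𝒞.L → Meas (𝒞.seg o j) F →
      ∑ v : Fin K → Bool, pstar v * F v = ∑ v : Fin K → Bool, q v * F v := by
    intro F j hj hF
    rw [Finset.sum_congr rfl (fun v _ => by rw [hpstar v])]
    exact model_marg_sum o 𝒞 q F hpos' hj hF
  have hswapC : ∀ j, j < 𝒞.L →
      ∑ v : Fin K → Bool, pstar v * fC j v = ∑ v : Fin K → Bool, q v * fC j v := by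
    intro j hj
    apply hswap _ j hj
    intro t t' h
    simp only [hfCdef]
    rw [marg_congr h, marg_congr h]
  have hswapS : ∀ i, i < 𝒞.L - 1 →
      ∑ v : Fin K → Bool, pstar v * fS i v = ∑ v : Fin K → Bool, q v * fS i v := by
    intro i hi
    apply hswap _ i (by omega)
    refine Meas.mono (X := 𝒞.ovl o i)
      (by rw [SegColl.ovl]; exact Finset.inter_subset_left) ?_
    intro t t' h
    simp only [hfSdef]
    rw [marg_congr h, marg_congr h]
  have hexp : ∀ wt : (Fin K → Bool) → ℝ, (∀ v, pstar v = 0 → wt v = 0) →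
      ∑ v : Fin K → Bool, wt v * G v
        = (∑ j ∈ Finset.range 𝒞.L, ∑ v : Fin K → Bool, wt v * fC j v)
          - ∑ i ∈ Finset.range (𝒞.L - 1), ∑ v : Fin K → Bool, wt v * fS i v := by
    intro wt hwt
    have h1 : ∑ v : Fin K → Bool, wt v * G v = ∑ v : Fin K → Bool,
        ((∑ j ∈ Finset.range 𝒞.L, wt v * fC j v)
          - ∑ i ∈ Finset.range (𝒞.L - 1), wt v * fS i v) := by
      apply Finset.sum_congr rfl
      intro v _
      by_cases h : pstar v = 0
      · simp [hwt v h]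
      · rw [hgdecomp v h, mul_sub, Finset.mul_sum, Finset.mul_sum]
    rw [h1, Finset.sum_sub_distrib]
    congr 1 <;> exact Finset.sum_comm
  have hGswap : ∑ v : Fin K → Bool, q v * G v = ∑ v : Fin K → Bool, pstar v * G v := by
    rw [hexp q hq0, hexp pstar (fun v h => h)]
    congr 1
    · exact Finset.sum_congr rfl fun j hj => (hswapC j (Finset.mem_range.mp hj)).symm
    · exact Finset.sum_congr rfl fun i hi => (hswapS i (Finset.mem_range.mp hi)).symm
  have hkl2 : ∑ v : Fin K → Bool, pstar v * G v
      = ∑ v : Fin K → Bool, pstar v * Real.logb 2 (pstar v / p v) := by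
    apply Finset.sum_congr rfl
    intro v _
    by_cases h : pstar v = 0
    · rw [h]
      ring
    · simp only [hGdef]
      rw [Real.logb_div h (ne_of_gt (hppos v))]
  have hdiff : (D.map fun t => Real.logb 2 (pstar t)).sum
      - (D.map fun t => Real.logb 2 (p t)).sum
      = (Multiset.card D : ℝ) * ∑ v : Fin K → Bool, q v * G v := by
    rw [map_sum_eq hD (fun t => Real.logb 2 (pstar t)),
      map_sum_eq hD (fun t => Real.logb 2 (p t)), ← mul_sub, ← Finset.sum_sub_distrib]
    congr 1
    apply Finset.sum_congr rfl
    intro v _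
    simp only [hGdef]
    ring
  have hmain : (D.map fun t => Real.logb 2 (pstar t)).sum
      - (D.map fun t => Real.logb 2 (p t)).sum
      = (Multiset.card D : ℝ) *
        ∑ v : Fin K → Bool, pstar v * Real.logb 2 (pstar v / p v) := by
    rw [hdiff, hGswap, hkl2]
  have hlog2pos : (0:ℝ) < Real.log 2 := Real.log_pos (by norm_num)
  have hcardpos : (0:ℝ) < (Multiset.card D : ℝ) := by
    have : 0 < Multiset.card D := Multiset.card_pos.mpr hD
    exact_mod_cast this
  have hKLlog : ∑ v : Fin K → Bool, pstar v * Real.logb 2 (pstar v / p v)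
      = (∑ v : Fin K → Bool, pstar v * Real.log (pstar v / p v)) / Real.log 2 := by
    rw [Finset.sum_div]
    apply Finset.sum_congr rfl
    intro v _
    rw [← Real.log_div_log]
    ring
  have hkl := kl_ineq hpstarM.1 hpMem.1 hppos
  refine ⟨hmain, ?_, ?_⟩
  · rw [hmain, hKLlog]
    exact mul_nonneg (le_of_lt hcardpos) (div_nonneg hkl.1 (le_of_lt hlog2pos))
  · constructor
    · intro h0
      rw [hmain, hKLlog] at h0
      rcases mul_eq_zero.mp h0 with h | h
      · exact absurd h (ne_of_gt hcardpos)
      · rcases div_eq_zero_iff.mp h with h | h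
        · exact hkl.2 h
        · exact absurd h (ne_of_gt hlog2pos)
    · intro hpp
      have hz : ∑ v : Fin K → Bool, pstar v * Real.logb 2 (pstar v / p v) = 0 :=
        Finset.sum_eq_zero fun v _ => by
          have hps : (0:ℝ) < pstar v := hpp ▸ hppos v
          rw [hpp, div_self (ne_of_gt hps), Real.logb_one, mul_zero]
      rw [hmain, hz, mul_zero]
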